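/- For all m ∈ ℕ and all j, k ∈ ℕ with j ≤ 2^m and k ≤ 2^m, the dyadic limit values x_c = lim_{n→∞} X^{m+n}_{2^n·j} (at c = a·j/2^m) and x_d = lim_{n→∞} X^{m+n}_{2^n·k} (at d = a·k/2^m) satisfy |x_c − x_d| ≤ M·|c − d|. -/

import Mathlib

open Filter Topology Set

/-- The dyadic limit values x_c (at c = a·j/2^m) and x_d (at d = a·k/2^m)
satisfy |x_c − x_d| ≤ M·|c − d|. -/
theorem dyadic_limits_lipschitz
    (a M L x₀ : ℝ) (ha : 0 < a) (hM : 0 < M) (hL : 0 < L)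
    (U : Set (ℝ × ℝ))
    (hU : U = Set.Icc (0 : ℝ) a ×ˢ Set.Icc (x₀ - M * a) (x₀ + M * a))
    (f : ℝ × ℝ → ℝ)
    (hf_lip : ∀ u ∈ U, ∀ v ∈ U, |f u - f v| ≤ L * (|u.1 - v.1| + |u.2 - v.2|))
    (hf_bdd : ∀ u ∈ U, |f u| ≤ M)
    (X : ℕ → ℕ → ℝ)
    (hX0 : ∀ m, X m 0 = x₀)
    (hXs : ∀ m k, X m (k + 1) = X m k + a / 2 ^ m * f (a * k / 2 ^ m, X m k)) :
    ∀ m j k : ℕ, j ≤ 2 ^ m → k ≤ 2 ^ m →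
      ∀ xc xd : ℝ,
        Tendsto (fun n : ℕ => X (m + n) (2 ^ n * j)) atTop (𝓝 xc) →
        Tendsto (fun n : ℕ => X (m + n) (2 ^ n * k)) atTop (𝓝 xd) →
        |xc - xd| ≤ M * |a * j / 2 ^ m - a * k / 2 ^ m| := by
  -- band bound
  have hband : ∀ m k, k ≤ 2 ^ m → |X m k - x₀| ≤ M * (a * k / 2 ^ m) := by
    intro m k
    induction k with
    | zero => intro _; simp [hX0]
    | succ k ih =>
      intro hk
      have hk' : k ≤ 2 ^ m := le_of_lt (Nat.lt_of_succ_le hk)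
      have hb := ih hk'
      have h2m : (0:ℝ) < 2 ^ m := by positivity
      have hkr : (k : ℝ) ≤ 2 ^ m := by exact_mod_cast Nat.cast_le.mpr hk' |>.trans (by push_cast; norm_num)
      have hfrac : a * k / 2 ^ m ≤ a := by
        rw [div_le_iff₀ h2m]
        have : (k : ℝ) ≤ 2 ^ m := by exact_mod_cast hk'
        nlinarith
      have hmem : (a * k / 2 ^ m, X m k) ∈ U := by
        rw [hU]
        constructor
        · constructor
          · positivity
          · exact hfrac
        · have hMa : M * (a * k / 2 ^ m) ≤ M * a := by
            apply mul_le_mul_of_nonneg_left hfrac hM.le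
          have := abs_le.mp hb
          constructor <;> simp <;> linarith [this.1, this.2]
      have hfb := hf_bdd _ hmem
      rw [hXs]
      have step : |a / 2 ^ m * f (a * k / 2 ^ m, X m k)| ≤ a / 2 ^ m * M := by
        rw [abs_mul, abs_of_pos (by positivity : (0:ℝ) < a / 2 ^ m)]
        exact mul_le_mul_of_nonneg_left hfb (by positivity)
      have tri : |X m k + a / 2 ^ m * f (a * k / 2 ^ m, X m k) - x₀|
          ≤ |X m k - x₀| + |a / 2 ^ m * f (a * k / 2 ^ m, X m k)| := by
        have := abs_add_le (X m k - x₀) (a / 2 ^ m * f (a * k / 2 ^ m, X m k))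
        calc |X m k + a / 2 ^ m * f (a * k / 2 ^ m, X m k) - x₀|
            = |(X m k - x₀) + a / 2 ^ m * f (a * k / 2 ^ m, X m k)| := by ring_nf
          _ ≤ _ := this
      calc |X m k + a / 2 ^ m * f (a * k / 2 ^ m, X m k) - x₀|
          ≤ |X m k - x₀| + |a / 2 ^ m * f (a * k / 2 ^ m, X m k)| := tri
        _ ≤ M * (a * k / 2 ^ m) + a / 2 ^ m * M := add_le_add hb step
        _ = M * (a * ((k:ℝ)+1) / 2 ^ m) := by field_simp
        _ = M * (a * ((k+1 : ℕ):ℝ) / 2 ^ m) := by push_cast; ring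
  -- step bound
  have hstep : ∀ m k, k ≤ 2 ^ m → |X m (k+1) - X m k| ≤ M * (a / 2 ^ m) := by
    intro m k hk
    have h2m : (0:ℝ) < 2 ^ m := by positivity
    have hfrac : a * k / 2 ^ m ≤ a := by
      rw [div_le_iff₀ h2m]
      have : (k : ℝ) ≤ 2 ^ m := by exact_mod_cast hk
      nlinarith
    have hb := hband m k hk
    have hmem : (a * k / 2 ^ m, X m k) ∈ U := by
      rw [hU]
      constructor
      · exact ⟨by positivity, hfrac⟩
      · have hMa : M * (a * k / 2 ^ m) ≤ M * a := mul_le_mul_of_nonneg_left hfrac hM.le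
        have := abs_le.mp hb
        constructor <;> simp <;> linarith [this.1, this.2]
    have hfb := hf_bdd _ hmem
    rw [hXs]
    have : X m k + a / 2 ^ m * f (a * k / 2 ^ m, X m k) - X m k
        = a / 2 ^ m * f (a * k / 2 ^ m, X m k) := by ring
    rw [this, abs_mul, abs_of_pos (by positivity : (0:ℝ) < a / 2 ^ m)]
    calc a / 2 ^ m * |f (a * k / 2 ^ m, X m k)| ≤ a / 2 ^ m * M :=
          mul_le_mul_of_nonneg_left hfb (by positivity)
      _ = M * (a / 2 ^ m) := by ring
  -- Lipschitz on iterates, k ≤ j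
  have hlip : ∀ m j k, k ≤ j → j ≤ 2 ^ m →
      |X m j - X m k| ≤ M * (a * ((j:ℝ) - (k:ℝ)) / 2 ^ m) := by
    intro m j k hkj
    induction j, hkj using Nat.le_induction with
    | base => intro _; simp
    | succ j hkj ih =>
      intro hj
      have hj' : j ≤ 2 ^ m := le_of_lt (Nat.lt_of_succ_le hj)
      have h1 := hstep m j hj'
      have h2 := ih hj'
      calc |X m (j+1) - X m k|
          = |(X m (j+1) - X m j) + (X m j - X m k)| := by ring_nf
        _ ≤ |X m (j+1) - X m j| + |X m j - X m k| := abs_add_le _ _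
        _ ≤ M * (a / 2 ^ m) + M * (a * ((j:ℝ) - (k:ℝ)) / 2 ^ m) := add_le_add h1 h2
        _ = M * (a * (((j:ℕ)+1 : ℕ) - (k:ℝ)) / 2 ^ m) := by push_cast; field_simp; ring
  -- main
  intro m j k hj hk xc xd hc hd
  have h2m : (0:ℝ) < 2 ^ m := by positivity
  have hbound : ∀ n, |X (m+n) (2 ^ n * j) - X (m+n) (2 ^ n * k)|
      ≤ M * (a * |(j:ℝ) - (k:ℝ)| / 2 ^ m) := by
    intro n
    have hcast : ∀ p q : ℕ, p ≤ 2 ^ m → q ≤ 2 ^ m → q ≤ p →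
        |X (m+n) (2 ^ n * p) - X (m+n) (2 ^ n * q)| ≤ M * (a * ((p:ℝ) - (q:ℝ)) / 2 ^ m) := by
      intro p q hp hq hqp
      have hle : 2 ^ n * q ≤ 2 ^ n * p := Nat.mul_le_mul_left _ hqp
      have hp' : 2 ^ n * p ≤ 2 ^ (m+n) := by
        rw [pow_add]
        calc 2 ^ n * p ≤ 2 ^ n * 2 ^ m := Nat.mul_le_mul_left _ hp
          _ = 2 ^ m * 2 ^ n := Nat.mul_comm _ _
      have := hlip (m+n) (2 ^ n * p) (2 ^ n * q) hle hp'
      calc |X (m+n) (2 ^ n * p) - X (m+n) (2 ^ n * q)|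
          ≤ M * (a * (((2 ^ n * p : ℕ):ℝ) - ((2 ^ n * q : ℕ):ℝ)) / 2 ^ (m+n)) := this
        _ = M * (a * ((p:ℝ) - (q:ℝ)) / 2 ^ m) := by
            push_cast
            rw [pow_add]
            field_simp
    rcases le_total k j with h | h
    · have := hcast j k hj hk h
      have habs : |(j:ℝ) - (k:ℝ)| = (j:ℝ) - (k:ℝ) := by
        rw [abs_of_nonneg]
        have : (k:ℝ) ≤ (j:ℝ) := by exact_mod_cast h
        linarith
      rw [habs]; exact this
    · have := hcast k j hk hj h
      have habs : |(j:ℝ) - (k:ℝ)| = (k:ℝ) - (j:ℝ) := by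
        rw [abs_sub_comm, abs_of_nonneg]
        have : (j:ℝ) ≤ (k:ℝ) := by exact_mod_cast h
        linarith
      rw [habs, abs_sub_comm]; exact this
  have htend : Tendsto (fun n => |X (m+n) (2 ^ n * j) - X (m+n) (2 ^ n * k)|) atTop
      (𝓝 |xc - xd|) := (hc.sub hd).abs
  have hlim := le_of_tendsto htend (Filter.Eventually.of_forall hbound)
  calc |xc - xd| ≤ M * (a * |(j:ℝ) - (k:ℝ)| / 2 ^ m) := hlim
    _ = M * |a * j / 2 ^ m - a * k / 2 ^ m| := by
        rw [show a * (j:ℝ) / 2 ^ m - a * (k:ℝ) / 2 ^ m = a / 2 ^ m * ((j:ℝ) - (k:ℝ)) by ring,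
          abs_mul, abs_of_pos (by positivity : (0:ℝ) < a / 2 ^ m)]
        ring
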